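/- Let δ, λ > 0 and let V ∈ ℝ^{n×n} be symmetric with eigendecomposition V = T Λ Tᵀ, where T is orthogonal (T Tᵀ = I_n) and Λ is diagonal. Then the matrix L* = T · diag((Λ_{11} − λδ)_+, …, (Λ_{nn} − λδ)_+) · Tᵀ, where (x)_+ = max(x,0), is a global minimizer of the function L ↦ δ‖L‖_* + (1/(2λ))‖L − V‖_F² over the set of symmetric positive semidefinite n×n matrices L. -/

import Mathlib

open Matrix BigOperators Finset

noncomputable section

namespace CitNet

variable {n : ℕ}

/-- Frobenius norm of a real matrix. -/
def frob (A : Matrix (Fin n) (Fin n) ℝ) : ℝ :=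
  Real.sqrt (∑ i, ∑ j, (A i j) ^ 2)

/-- Elementwise ℓ1 norm. -/
def l1 (A : Matrix (Fin n) (Fin n) ℝ) : ℝ :=
  ∑ i, ∑ j, |A i j|

/-- Elementwise sup norm. -/
def supNorm (A : Matrix (Fin n) (Fin n) ℝ) : ℝ :=
  ⨆ i, ⨆ j, |A i j|

/-- Trace inner product. -/
def tinner (A B : Matrix (Fin n) (Fin n) ℝ) : ℝ :=
  Matrix.trace (Aᵀ * B)

/-- Nuclear norm: trace of the PSD square root of AᴴA. -/
def nuclearNorm (A : Matrix (Fin n) (Fin n) ℝ) : ℝ :=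
  ((Matrix.posSemidef_conjTranspose_mul_self A).1.eigenvectorUnitary.1 *
    Matrix.diagonal ((RCLike.ofReal : ℝ → ℝ) ∘ (√·) ∘ (Matrix.posSemidef_conjTranspose_mul_self A).1.eigenvalues) *
    (star (Matrix.posSemidef_conjTranspose_mul_self A).1.eigenvectorUnitary :
      Matrix (Fin n) (Fin n) ℝ)).trace

/-- Singular values in decreasing order: `svDesc A j` is σ_{j+1}(A). -/
def svDesc (A : Matrix (Fin n) (Fin n) ℝ) : Fin n → ℝ := fun j =>
  Real.sqrt ((Matrix.isHermitian_conjTranspose_mul_self A : (Aᵀ * A).IsHermitian).eigenvalues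
    (Tuple.sort (Matrix.isHermitian_conjTranspose_mul_self A :
      (Aᵀ * A).IsHermitian).eigenvalues j.rev))

/-- Operator norm: largest singular value. -/
def opNorm (A : Matrix (Fin n) (Fin n) ℝ) : ℝ :=
  ⨆ j, svDesc A j

/-- The all-ones matrix 𝟙𝟙ᵀ. -/
def onesMat : Matrix (Fin n) (Fin n) ℝ :=
  Matrix.of fun _ _ => (1 : ℝ)

/-- The centering matrix J = I − (1/n)𝟙𝟙ᵀ. -/
def Jmat (n : ℕ) : Matrix (Fin n) (Fin n) ℝ :=
  1 - (n : ℝ)⁻¹ • onesMat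

/-- Restriction of a matrix to an index set. -/
def restrict (A : Matrix (Fin n) (Fin n) ℝ) (Ω : Finset (Fin n × Fin n)) :
    Matrix (Fin n) (Fin n) ℝ :=
  Matrix.of fun i j => if (i, j) ∈ Ω then A i j else 0

/-- The logistic (sigmoid) matrix P(Θ). -/
def logis (Θ : Matrix (Fin n) (Fin n) ℝ) : Matrix (Fin n) (Fin n) ℝ :=
  Matrix.of fun i j => Real.exp (Θ i j) / (1 + Real.exp (Θ i j))

/-- Negative log-likelihood function h. -/
def hfun (X Θ : Matrix (Fin n) (Fin n) ℝ) : ℝ :=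
  -(1 / (n : ℝ)) * ∑ i, ∑ j, (X i j * Θ i j - Real.log (1 + Real.exp (Θ i j)))

lemma frob_sq (A : Matrix (Fin n) (Fin n) ℝ) :
    frob A ^ 2 = Matrix.trace (Aᵀ * A) := by
  unfold frob
  rw [Real.sq_sqrt (by positivity)]
  rw [Finset.sum_comm]
  simp [Matrix.trace, Matrix.diag, Matrix.mul_apply, sq]

lemma nuclear_psd {L : Matrix (Fin n) (Fin n) ℝ} (hL : L.PosSemidef) :
    nuclearNorm L = L.trace := by
  unfold nuclearNorm
  congr 1
  have hP := Matrix.posSemidef_conjTranspose_mul_self L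
  have h1 : (hP.1.eigenvectorUnitary.1 *
      Matrix.diagonal ((RCLike.ofReal : ℝ → ℝ) ∘ (√·) ∘ hP.1.eigenvalues) *
      (star hP.1.eigenvectorUnitary : Matrix (Fin n) (Fin n) ℝ)) = cfc Real.sqrt (Lᴴ * L) := by
    rw [hP.1.cfc_eq]; rfl
  have hLL : (L * L).PosSemidef := by
    have := hP; rwa [show Lᴴ = L from hL.1] at this
  open scoped MatrixOrder in
  (rw [h1, show Lᴴ = L from hL.1, ← cfcₙ_eq_cfc, ← CFC.sqrt_eq_real_sqrt (L * L) hLL.nonneg]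
   exact CFC.sqrt_mul_self L hL.nonneg)

lemma diag_nonneg' {L : Matrix (Fin n) (Fin n) ℝ} (hL : L.PosSemidef) (i : Fin n) :
    0 ≤ L i i := by
  exact hL.diag_nonneg

lemma scalar_key (a c t : ℝ) (ha : 0 ≤ a) (ht : 0 < t) :
    2 * t * max (c - t) 0 + (max (c - t) 0 - c) ^ 2 ≤ 2 * t * a + (a - c) ^ 2 := by
  rcases le_total (c - t) 0 with h | h
  · rw [max_eq_right h]; nlinarith
  · rw [max_eq_left h]; nlinarith [sq_nonneg (a - (c - t))]

lemma conj_mul_conj (T A B : Matrix (Fin n) (Fin n) ℝ) (hTT : Tᵀ * T = 1) :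
    (T * A * Tᵀ) * (T * B * Tᵀ) = T * (A * B) * Tᵀ := by
  simp only [Matrix.mul_assoc]
  rw [← Matrix.mul_assoc Tᵀ T, hTT, Matrix.one_mul]

lemma trace_conj (T M : Matrix (Fin n) (Fin n) ℝ) (hTT : Tᵀ * T = 1) :
    Matrix.trace (T * M * Tᵀ) = Matrix.trace M := by
  rw [Matrix.trace_mul_comm, ← Matrix.mul_assoc, hTT, Matrix.one_mul]

lemma transpose_conj (T M : Matrix (Fin n) (Fin n) ℝ) :
    (T * M * Tᵀ)ᵀ = T * Mᵀ * Tᵀ := by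
  simp [Matrix.transpose_mul, Matrix.mul_assoc]

lemma trace_sq_conj (T M : Matrix (Fin n) (Fin n) ℝ) (hTT : Tᵀ * T = 1) :
    Matrix.trace ((T * M * Tᵀ)ᵀ * (T * M * Tᵀ)) = Matrix.trace (Mᵀ * M) := by
  rw [transpose_conj, conj_mul_conj T _ _ hTT, trace_conj T _ hTT]

lemma trace_sq_sum (M : Matrix (Fin n) (Fin n) ℝ) :
    Matrix.trace (Mᵀ * M) = ∑ i, ∑ j, (M j i) ^ 2 := by
  simp [Matrix.trace, Matrix.diag, Matrix.mul_apply, sq]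

/-- singular-value soft-thresholding solves the nuclear-norm proximal problem
over symmetric PSD matrices. -/
theorem stmt17 (n : ℕ) (δ lam : ℝ) (hδ : 0 < δ) (hlam : 0 < lam)
    (V T Λ : Matrix (Fin n) (Fin n) ℝ) (hV : V.IsSymm)
    (hT : T * Tᵀ = 1) (hΛ : Λ.IsDiag) (hdec : V = T * Λ * Tᵀ) :
    (T * Matrix.diagonal (fun i => max (Λ i i - lam * δ) 0) * Tᵀ).PosSemidef ∧
    ∀ L : Matrix (Fin n) (Fin n) ℝ, L.PosSemidef →
      δ * nuclearNorm (T * Matrix.diagonal (fun i => max (Λ i i - lam * δ) 0) * Tᵀ)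
          + (1 / (2 * lam)) *
            (frob (T * Matrix.diagonal (fun i => max (Λ i i - lam * δ) 0) * Tᵀ - V)) ^ 2
        ≤ δ * nuclearNorm L + (1 / (2 * lam)) * (frob (L - V)) ^ 2 := by
  have hTT : Tᵀ * T = 1 := mul_eq_one_comm.mp hT
  set D : Matrix (Fin n) (Fin n) ℝ :=
    Matrix.diagonal (fun i => max (Λ i i - lam * δ) 0) with hDdef
  have hDpsd : D.PosSemidef :=
    Matrix.PosSemidef.diagonal (fun i => le_max_right _ _)
  have hstar : (T * D * Tᵀ).PosSemidef := by
    have := hDpsd.mul_mul_conjTranspose_same T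
    simpa [Matrix.conjTranspose_eq_transpose_of_trivial] using this
  refine ⟨hstar, fun L hL => ?_⟩
  -- put L in the frame of T
  set B : Matrix (Fin n) (Fin n) ℝ := Tᵀ * L * T with hBdef
  have hBL : L = T * B * Tᵀ := by
    rw [hBdef]
    simp only [← Matrix.mul_assoc]
    rw [hT, Matrix.one_mul, Matrix.mul_assoc, hT, Matrix.mul_one]
  have hBpsd : B.PosSemidef := by
    have := hL.conjTranspose_mul_mul_same T
    simpa [Matrix.conjTranspose_eq_transpose_of_trivial] using this
  -- nuclear norms are traces
  rw [nuclear_psd hstar, nuclear_psd hL]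
  -- differences as conjugations
  have hdiff1 : T * D * Tᵀ - V = T * (D - Λ) * Tᵀ := by
    rw [hdec, Matrix.mul_sub, Matrix.sub_mul]
  have hdiff2 : L - V = T * (B - Λ) * Tᵀ := by
    rw [hdec, hBL, Matrix.mul_sub, Matrix.sub_mul]
  rw [hdiff1, hdiff2, frob_sq, frob_sq, trace_sq_conj T _ hTT, trace_sq_conj T _ hTT,
    trace_sq_sum, trace_sq_sum]
  -- traces of L and L* in the frame
  have htr1 : Matrix.trace (T * D * Tᵀ) = Matrix.trace D := trace_conj T _ hTT
  have htr2 : Matrix.trace L = Matrix.trace B := by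
    rw [hBL]; exact trace_conj T _ hTT
  rw [htr1, htr2]
  -- reduce to a sum inequality
  have hexp : ∀ x q : ℝ, δ * x + 1 / (2 * lam) * q
      = 1 / (2 * lam) * (2 * (lam * δ) * x + q) := by
    intro x q
    field_simp
  rw [Matrix.trace, Matrix.trace, hexp, hexp]
  apply mul_le_mul_of_nonneg_left _ (by positivity)
  simp only [Matrix.diag]
  rw [Finset.mul_sum, Finset.mul_sum, ← Finset.sum_add_distrib, ← Finset.sum_add_distrib]
  apply Finset.sum_le_sum
  intro i _
  have hDL : ∑ j, ((D - Λ) j i) ^ 2 = (max (Λ i i - lam * δ) 0 - Λ i i) ^ 2 := by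
    rw [Finset.sum_eq_single_of_mem i (Finset.mem_univ i)]
    · simp [hDdef, Matrix.sub_apply, Matrix.diagonal_apply_eq]
    · intro j _ hj
      simp [hDdef, Matrix.sub_apply, Matrix.diagonal_apply_ne _ hj, hΛ hj]
  have hBL2 : ((B - Λ) i i) ^ 2 ≤ ∑ j, ((B - Λ) j i) ^ 2 :=
    Finset.single_le_sum (f := fun j => ((B - Λ) j i) ^ 2)
      (fun j _ => sq_nonneg _) (Finset.mem_univ i)
  have hDii : D i i = max (Λ i i - lam * δ) 0 := by
    simp [hDdef, Matrix.diagonal_apply_eq]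
  rw [hDL, hDii]
  have hkey := scalar_key (B i i) (Λ i i) (lam * δ)
    (diag_nonneg' hBpsd i) (mul_pos hlam hδ)
  have : ((B - Λ) i i) ^ 2 = (B i i - Λ i i) ^ 2 := by simp [Matrix.sub_apply]
  linarith [hBL2, this ▸ hBL2]

end CitNet
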